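/- With G_{θ,θ'} := lim_n f^n_{S^{−n}θ'} ∘ (f^n_{S^{−n}θ})⁻¹ defined on K(θ) as above, one has G_{θ,θ'}(K(θ)) = K(θ') and G_{θ',θ} = G_{θ,θ'}⁻¹ on K(θ'). In particular, G_{θ,θ'} : K(θ) → K(θ') is an orientation-preserving homeomorphism. -/

import Mathlib

open Set Filter Metric Topology
def fiter {Θ : Type*} (S : Θ → Θ) (f : Θ → ℝ → ℝ) : ℕ → Θ → ℝ → ℝ
  | 0, _, y => y
  | n + 1, θ, y => f (S^[n] θ) (fiter S f n θ y)

/-- The maps `G_{θ,θ',n} = f^n_{S^{-n}θ'} ∘ (f^n_{S^{-n}θ})⁻¹` on `K_n(θ)`. -/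
noncomputable def Gn {Θ : Type*} (S : Θ ≃ Θ) (f : Θ → ℝ → ℝ) (M : ℝ)
    (θ θ' : Θ) (n : ℕ) (y : ℝ) : ℝ :=
  fiter S f n ((⇑S.symm)^[n] θ')
    (Function.invFunOn (fiter S f n ((⇑S.symm)^[n] θ)) (Icc (-M) M) y)

section SmallLemmas

variable {Θ : Type*} (S : Θ → Θ) (f : Θ → ℝ → ℝ) {M : ℝ}

lemma fiter_zero (ϑ : Θ) (y : ℝ) : fiter S f 0 ϑ y = y := rfl

lemma fiter_succ (n : ℕ) (ϑ : Θ) (y : ℝ) :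
    fiter S f (n + 1) ϑ y = f (S^[n] ϑ) (fiter S f n ϑ y) := rfl

lemma fiter_mapsTo (hM : 0 < M) (hmaps : ∀ θ, MapsTo (f θ) (Icc (-M) M) (Ioo (-M) M))
    (n : ℕ) (ϑ : Θ) : MapsTo (fiter S f n ϑ) (Icc (-M) M) (Icc (-M) M) := by
  induction n with
  | zero => exact fun x hx => hx
  | succ n ih =>
    intro x hx
    exact Ioo_subset_Icc_self (hmaps _ (ih hx))

lemma fiter_continuousOn (hM : 0 < M) (hmaps : ∀ θ, MapsTo (f θ) (Icc (-M) M) (Ioo (-M) M))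
    (hcont : ∀ θ, ContinuousOn (f θ) (Icc (-M) M)) (n : ℕ) (ϑ : Θ) :
    ContinuousOn (fiter S f n ϑ) (Icc (-M) M) := by
  induction n with
  | zero => exact continuousOn_id
  | succ n ih =>
    exact (hcont _).comp ih (fiter_mapsTo S f hM hmaps n ϑ)

lemma fiter_strictMonoOn (hM : 0 < M) (hmaps : ∀ θ, MapsTo (f θ) (Icc (-M) M) (Ioo (-M) M))
    (hmono : ∀ θ, StrictMonoOn (f θ) (Icc (-M) M)) (n : ℕ) (ϑ : Θ) :
    StrictMonoOn (fiter S f n ϑ) (Icc (-M) M) := by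
  induction n with
  | zero => exact fun x _ y _ h => h
  | succ n ih =>
    exact (hmono _).comp ih (fiter_mapsTo S f hM hmaps n ϑ)

lemma fiter_lip (hM : 0 < M) (hmaps : ∀ θ, MapsTo (f θ) (Icc (-M) M) (Ioo (-M) M))
    {Qf : ℝ} (hQf0 : 0 ≤ Qf)
    (hlip : ∀ θ, ∀ x ∈ Icc (-M) M, ∀ y ∈ Icc (-M) M, |f θ x - f θ y| ≤ Qf * |x - y|)
    (n : ℕ) (ϑ : Θ) :
    ∀ x ∈ Icc (-M) M, ∀ y ∈ Icc (-M) M,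
      |fiter S f n ϑ x - fiter S f n ϑ y| ≤ Qf ^ n * |x - y| := by
  induction n with
  | zero => intro x _ y _; simp [fiter_zero]
  | succ n ih =>
    intro x hx y hy
    have h1 := hlip (S^[n] ϑ) _ (fiter_mapsTo S f hM hmaps n ϑ hx)
      _ (fiter_mapsTo S f hM hmaps n ϑ hy)
    calc |fiter S f (n+1) ϑ x - fiter S f (n+1) ϑ y|
        ≤ Qf * |fiter S f n ϑ x - fiter S f n ϑ y| := h1
      _ ≤ Qf * (Qf ^ n * |x - y|) := by
          exact mul_le_mul_of_nonneg_left (ih x hx y hy) hQf0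
      _ = Qf ^ (n + 1) * |x - y| := by ring

lemma fiter_add (m n : ℕ) (ϑ : Θ) (y : ℝ) :
    fiter S f (m + n) ϑ y = fiter S f n (S^[m] ϑ) (fiter S f m ϑ y) := by
  induction n with
  | zero => rfl
  | succ n ih =>
    show fiter S f ((m + n) + 1) ϑ y = _
    rw [fiter_succ, ih, fiter_succ, Function.iterate_add_apply,
      ← Function.iterate_add_apply, ← Function.iterate_add_apply, add_comm m n]

end SmallLemmas

section EquivLemmas

variable {Θ : Type*} (S : Θ ≃ Θ) (f : Θ → ℝ → ℝ)

lemma iter_cancel (n : ℕ) (x : Θ) : (⇑S)^[n] ((⇑S.symm)^[n] x) = x :=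
  (Function.LeftInverse.iterate S.right_inv n) x

lemma fiter_succ_symm (n : ℕ) (ϑ : Θ) (y : ℝ) :
    fiter S f (n + 1) ((⇑S.symm)^[n + 1] ϑ) y
      = f (S.symm ϑ) (fiter S f n ((⇑S.symm)^[n] (S.symm ϑ)) y) := by
  rw [fiter_succ]
  have h1 : (⇑S.symm)^[n + 1] ϑ = (⇑S.symm)^[n] (S.symm ϑ) := Function.iterate_succ_apply _ _ _
  have h2 : (⇑S)^[n] ((⇑S.symm)^[n + 1] ϑ) = S.symm ϑ := by
    rw [h1]; exact iter_cancel S n (S.symm ϑ)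
  rw [h2, h1]

lemma fiter_decomp (m n : ℕ) (ϑ : Θ) (y : ℝ) :
    fiter S f (m + n) ((⇑S.symm)^[m + n] ϑ) y
      = fiter S f n ((⇑S.symm)^[n] ϑ)
          (fiter S f m ((⇑S.symm)^[m] ((⇑S.symm)^[n] ϑ)) y) := by
  have h0 : (⇑S.symm)^[m + n] ϑ = (⇑S.symm)^[m] ((⇑S.symm)^[n] ϑ) :=
    Function.iterate_add_apply _ _ _ _
  have h1 : (⇑S)^[m] ((⇑S.symm)^[m + n] ϑ) = (⇑S.symm)^[n] ϑ := by
    rw [h0]; exact iter_cancel S m _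
  rw [fiter_add (S := ⇑S) f m n, h1, h0]

end EquivLemmas

/-- Continuity of `invFunOn` for a continuous injective map on a compact set. -/
lemma continuousOn_invFunOn {X Y : Type*} [TopologicalSpace X] [TopologicalSpace Y]
    [T2Space Y] [Nonempty X] {g : X → Y} {s : Set X}
    (hs : IsCompact s) (hc : ContinuousOn g s) (hinj : InjOn g s) :
    ContinuousOn (Function.invFunOn g s) (g '' s) := by
  rw [continuousOn_iff_continuous_restrict]
  rw [continuous_iff_isClosed]
  intro C hC
  have key : (Set.domRestrict (g '' s) (Function.invFunOn g s)) ⁻¹' C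
      = Subtype.val ⁻¹' (g '' (s ∩ C)) := by
    ext ⟨z, hz⟩
    simp only [Set.domRestrict, mem_preimage]
    constructor
    · intro hx
      have hex : ∃ a ∈ s, g a = z := by
        obtain ⟨a, ha, rfl⟩ := hz; exact ⟨a, ha, rfl⟩
      exact ⟨Function.invFunOn g s z, ⟨Function.invFunOn_mem hex, hx⟩,
        Function.invFunOn_eq hex⟩
    · rintro ⟨x, ⟨hxs, hxC⟩, rfl⟩
      have hex : ∃ a ∈ s, g a = g x := ⟨x, hxs, rfl⟩
      have : Function.invFunOn g s (g x) = x :=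
        hinj (Function.invFunOn_mem hex) hxs (Function.invFunOn_eq hex)
      rwa [this]
  rw [key]
  exact (((hs.inter_right hC).image_of_continuousOn
    (hc.mono inter_subset_left)).isClosed).preimage continuous_subtype_val

/-- `FF S f n ϑ = f^n_{S^{-n}ϑ}`. -/
def FF {Θ : Type*} (S : Θ ≃ Θ) (f : Θ → ℝ → ℝ) (n : ℕ) (ϑ : Θ) : ℝ → ℝ :=
  fiter S f n ((⇑S.symm)^[n] ϑ)

section FFLemmas

variable {Θ : Type*} (S : Θ ≃ Θ) (f : Θ → ℝ → ℝ) {M : ℝ}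

lemma Gn_eq (r t : Θ) (n : ℕ) (y : ℝ) :
    Gn S f M r t n y = FF S f n t (Function.invFunOn (FF S f n r) (Icc (-M) M) y) := rfl

lemma FF_zero (ϑ : Θ) (y : ℝ) : FF S f 0 ϑ y = y := rfl

lemma FF_succ' (n : ℕ) (ϑ : Θ) (y : ℝ) :
    FF S f (n + 1) ϑ y = f (S.symm ϑ) (FF S f n (S.symm ϑ) y) :=
  fiter_succ_symm S f n ϑ y

lemma FF_decomp (m n : ℕ) (ϑ : Θ) (y : ℝ) :
    FF S f (m + n) ϑ y = FF S f n ϑ (FF S f m ((⇑S.symm)^[n] ϑ) y) :=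
  fiter_decomp S f m n ϑ y

end FFLemmas

lemma aux_main {Θ : Type*} [MetricSpace Θ]
    (S : Θ ≃ Θ) (M : ℝ) (hM : 0 < M)
    (f : Θ → ℝ → ℝ)
    (hmaps : ∀ θ, MapsTo (f θ) (Icc (-M) M) (Ioo (-M) M))
    (hmono : ∀ θ, StrictMonoOn (f θ) (Icc (-M) M))
    (hC1 : ∀ θ, ContDiffOn ℝ 1 (f θ) (Icc (-M) M))
    (hpos : ∀ θ, ∀ y ∈ Icc (-M) M, 0 < derivWithin (f θ) (Icc (-M) M) y)
    (L C α Qf : ℝ) (hL : 0 ≤ L) (hC : 0 < C) (hα : α ∈ Ioo (0:ℝ) 1)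
    (hLip : ∀ θ θ' : Θ, ∀ y ∈ Icc (-M) M, |f θ y - f θ' y| ≤ L * dist θ θ')
    (hQf : ∀ θ, ∀ y ∈ Icc (-M) M, derivWithin (f θ) (Icc (-M) M) y ≤ Qf)
    (hαQ : α * Qf < 1)
    (φm φp : Θ → ℝ)
    (hφp : ∀ ϑ : Θ, Antitone (fun n => fiter S f n ((⇑S.symm)^[n] ϑ) M) ∧
      Tendsto (fun n => fiter S f n ((⇑S.symm)^[n] ϑ) M) atTop (nhds (φp ϑ)))
    (hφm : ∀ ϑ : Θ, Monotone (fun n => fiter S f n ((⇑S.symm)^[n] ϑ) (-M)) ∧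
      Tendsto (fun n => fiter S f n ((⇑S.symm)^[n] ϑ) (-M)) atTop (nhds (φm ϑ)))
    (p q : Θ)
    (hpq : ∀ n : ℕ, 0 < n →
      dist ((⇑S.symm)^[n] p) ((⇑S.symm)^[n] q) ≤ C * α ^ n * dist p q)
    (G H : ℝ → ℝ)
    (hG : TendstoUniformlyOn (Gn S f M p q) G atTop (Icc (φm p) (φp p)))
    (hH : TendstoUniformlyOn (Gn S f M q p) H atTop (Icc (φm q) (φp q))) :
    (∀ y ∈ Icc (φm p) (φp p), G y ∈ Icc (φm q) (φp q)) ∧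
    (∀ y ∈ Icc (φm p) (φp p), H (G y) = y) ∧
    MonotoneOn G (Icc (φm p) (φp p)) ∧
    ContinuousOn G (Icc (φm p) (φp p)) := by
  have hMM : -M ≤ M := by linarith
  have hMIcc : M ∈ Icc (-M) M := ⟨hMM, le_rfl⟩
  have hmIcc : -M ∈ Icc (-M) M := ⟨le_rfl, hMM⟩
  have h0I : (0:ℝ) ∈ Icc (-M) M := ⟨by linarith, by linarith⟩
  have hQf0 : 0 < Qf := lt_of_lt_of_le (hpos p 0 h0I) (hQf p 0 h0I)
  have hcont : ∀ ϑ, ContinuousOn (f ϑ) (Icc (-M) M) := fun ϑ => (hC1 ϑ).continuousOn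
  have hlipf : ∀ ϑ, ∀ x ∈ Icc (-M) M, ∀ y ∈ Icc (-M) M, |f ϑ x - f ϑ y| ≤ Qf * |x - y| := by
    intro ϑ x hx y hy
    have hbd : ∀ z ∈ Icc (-M) M, ‖derivWithin (f ϑ) (Icc (-M) M) z‖ ≤ Qf := by
      intro z hz
      rw [Real.norm_eq_abs, abs_of_pos (hpos ϑ z hz)]
      exact hQf ϑ z hz
    have := Convex.norm_image_sub_le_of_norm_derivWithin_le
      ((hC1 ϑ).differentiableOn one_ne_zero) hbd (convex_Icc _ _) hy hx
    simpa [Real.norm_eq_abs] using this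
  -- basic facts about FF
  have hFmaps : ∀ n ϑ, MapsTo (FF S f n ϑ) (Icc (-M) M) (Icc (-M) M) :=
    fun n ϑ => fiter_mapsTo (⇑S) f hM hmaps n _
  have hFcont : ∀ n ϑ, ContinuousOn (FF S f n ϑ) (Icc (-M) M) :=
    fun n ϑ => fiter_continuousOn (⇑S) f hM hmaps hcont n _
  have hFmono : ∀ n ϑ, StrictMonoOn (FF S f n ϑ) (Icc (-M) M) :=
    fun n ϑ => fiter_strictMonoOn (⇑S) f hM hmaps hmono n _
  have hFlip : ∀ n ϑ, ∀ x ∈ Icc (-M) M, ∀ y ∈ Icc (-M) M,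
      |FF S f n ϑ x - FF S f n ϑ y| ≤ Qf ^ n * |x - y| :=
    fun n ϑ => fiter_lip (⇑S) f hM hmaps hQf0.le hlipf n _
  have hφp' : ∀ ϑ : Θ, Antitone (fun n => FF S f n ϑ M) ∧
      Tendsto (fun n => FF S f n ϑ M) atTop (nhds (φp ϑ)) := hφp
  have hφm' : ∀ ϑ : Θ, Monotone (fun n => FF S f n ϑ (-M)) ∧
      Tendsto (fun n => FF S f n ϑ (-M)) atTop (nhds (φm ϑ)) := hφm
  -- interval bounds
  have hble : ∀ ϑ n, φp ϑ ≤ FF S f n ϑ M := fun ϑ n =>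
    le_of_tendsto (hφp' ϑ).2 (eventually_atTop.2 ⟨n, fun k hk => (hφp' ϑ).1 hk⟩)
  have hage : ∀ ϑ n, FF S f n ϑ (-M) ≤ φm ϑ := fun ϑ n =>
    ge_of_tendsto (hφm' ϑ).2 (eventually_atTop.2 ⟨n, fun k hk => (hφm' ϑ).1 hk⟩)
  have hab : ∀ ϑ n, FF S f n ϑ (-M) ≤ FF S f n ϑ M :=
    fun ϑ n => (hFmono n ϑ).monotoneOn hmIcc hMIcc hMM
  have hmple : ∀ ϑ, φm ϑ ≤ φp ϑ := fun ϑ =>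
    le_of_tendsto_of_tendsto' (hφm' ϑ).2 (hφp' ϑ).2 (hab ϑ)
  have hφmIcc : ∀ ϑ, φm ϑ ∈ Icc (-M) M := fun ϑ =>
    ⟨hage ϑ 0, le_trans (le_trans (hmple ϑ) (hble ϑ 0)) le_rfl⟩
  have hφpIcc : ∀ ϑ, φp ϑ ∈ Icc (-M) M := fun ϑ =>
    ⟨le_trans (hage ϑ 0) (hmple ϑ), hble ϑ 0⟩
  -- the contraction constant
  have h1Qα : 0 < 1 - Qf * α := by nlinarith [hα.1, hα.2]
  set K : ℝ := L * C * dist p q * α / (1 - Qf * α) with hK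
  have hK0 : 0 ≤ K := by
    apply div_nonneg _ h1Qα.le
    exact mul_nonneg (mul_nonneg (mul_nonneg hL hC.le) dist_nonneg) hα.1.le
  -- key comparison estimate
  have keyA : ∀ n m, ∀ x ∈ Icc (-M) M,
      |FF S f n ((⇑S.symm)^[m] p) x - FF S f n ((⇑S.symm)^[m] q) x| ≤ K * α ^ m := by
    intro n
    induction n with
    | zero =>
      intro m x _
      simpa [FF_zero] using mul_nonneg hK0 (pow_nonneg hα.1.le m)
    | succ n ih =>
      intro m x hx
      have e1 : S.symm ((⇑S.symm)^[m] p) = (⇑S.symm)^[m+1] p :=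
        (Function.iterate_succ_apply' _ _ _).symm
      have e2 : S.symm ((⇑S.symm)^[m] q) = (⇑S.symm)^[m+1] q :=
        (Function.iterate_succ_apply' _ _ _).symm
      rw [FF_succ', FF_succ', e1, e2]
      set u := FF S f n ((⇑S.symm)^[m+1] p) x with hu
      set v := FF S f n ((⇑S.symm)^[m+1] q) x with hv
      have huI : u ∈ Icc (-M) M := hFmaps n _ hx
      have hvI : v ∈ Icc (-M) M := hFmaps n _ hx
      have hd : dist ((⇑S.symm)^[m+1] p) ((⇑S.symm)^[m+1] q) ≤ C * α ^ (m+1) * dist p q :=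
        hpq (m+1) (Nat.succ_pos m)
      calc |f ((⇑S.symm)^[m+1] p) u - f ((⇑S.symm)^[m+1] q) v|
          ≤ |f ((⇑S.symm)^[m+1] p) u - f ((⇑S.symm)^[m+1] p) v|
            + |f ((⇑S.symm)^[m+1] p) v - f ((⇑S.symm)^[m+1] q) v| := abs_sub_le _ _ _
        _ ≤ Qf * |u - v| + L * dist ((⇑S.symm)^[m+1] p) ((⇑S.symm)^[m+1] q) :=
            add_le_add (hlipf _ u huI v hvI) (hLip _ _ v hvI)
        _ ≤ Qf * (K * α ^ (m+1)) + L * (C * α ^ (m+1) * dist p q) := by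
            refine add_le_add (mul_le_mul_of_nonneg_left (ih (m+1) x hx) hQf0.le)
              (mul_le_mul_of_nonneg_left hd hL)
        _ = K * α ^ m := by
            rw [hK]; field_simp; ring
  -- equivariance of the boundary graphs
  have hφpeq : ∀ ϑ n, φp ϑ = FF S f n ϑ (φp ((⇑S.symm)^[n] ϑ)) := by
    intro ϑ n
    have h1 : Tendsto (fun m => FF S f (m + n) ϑ M) atTop (𝓝 (φp ϑ)) :=
      (hφp' ϑ).2.comp (tendsto_add_atTop_nat n)
    have h2 : ∀ m, FF S f (m + n) ϑ M = FF S f n ϑ (FF S f m ((⇑S.symm)^[n] ϑ) M) :=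
      fun m => FF_decomp S f m n ϑ M
    have h3 : Tendsto (fun m => FF S f n ϑ (FF S f m ((⇑S.symm)^[n] ϑ) M)) atTop
        (𝓝 (FF S f n ϑ (φp ((⇑S.symm)^[n] ϑ)))) := by
      refine (((hFcont n ϑ) _ (hφpIcc _)).tendsto).comp ?_
      rw [tendsto_nhdsWithin_iff]
      exact ⟨(hφp' _).2, Eventually.of_forall (fun m => hFmaps m _ hMIcc)⟩
    exact tendsto_nhds_unique (h1.congr h2) h3
  have hφmeq : ∀ ϑ n, φm ϑ = FF S f n ϑ (φm ((⇑S.symm)^[n] ϑ)) := by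
    intro ϑ n
    have h1 : Tendsto (fun m => FF S f (m + n) ϑ (-M)) atTop (𝓝 (φm ϑ)) :=
      (hφm' ϑ).2.comp (tendsto_add_atTop_nat n)
    have h2 : ∀ m, FF S f (m + n) ϑ (-M) = FF S f n ϑ (FF S f m ((⇑S.symm)^[n] ϑ) (-M)) :=
      fun m => FF_decomp S f m n ϑ (-M)
    have h3 : Tendsto (fun m => FF S f n ϑ (FF S f m ((⇑S.symm)^[n] ϑ) (-M))) atTop
        (𝓝 (FF S f n ϑ (φm ((⇑S.symm)^[n] ϑ)))) := by
      refine (((hFcont n ϑ) _ (hφmIcc _)).tendsto).comp ?_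
      rw [tendsto_nhdsWithin_iff]
      exact ⟨(hφm' _).2, Eventually.of_forall (fun m => hFmaps m _ hmIcc)⟩
    exact tendsto_nhds_unique (h1.congr h2) h3
  -- Hölder continuity of the boundary graphs along the stable fibre
  have hφpK : ∀ m, |φp ((⇑S.symm)^[m] p) - φp ((⇑S.symm)^[m] q)| ≤ K * α ^ m := by
    intro m
    refine le_of_tendsto (((hφp' _).2.sub (hφp' _).2).abs) (Eventually.of_forall ?_)
    exact fun n => keyA n m M hMIcc
  have hφmK : ∀ m, |φm ((⇑S.symm)^[m] p) - φm ((⇑S.symm)^[m] q)| ≤ K * α ^ m := by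
    intro m
    refine le_of_tendsto (((hφm' _).2.sub (hφm' _).2).abs) (Eventually.of_forall ?_)
    exact fun n => keyA n m (-M) hmIcc
  -- the Gn formula
  have hGneq : ∀ (r t : Θ) n, ∀ x ∈ Icc (-M) M,
      Gn S f M r t n (FF S f n r x) = FF S f n t x := by
    intro r t n x hx
    have hex : ∃ a ∈ Icc (-M) M, FF S f n r a = FF S f n r x := ⟨x, hx, rfl⟩
    have h1 : Function.invFunOn (FF S f n r) (Icc (-M) M) (FF S f n r x) = x :=
      (hFmono n r).injOn (Function.invFunOn_mem hex) hx (Function.invFunOn_eq hex)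
    rw [Gn_eq, h1]
  have hKsub : ∀ (r : Θ) n, Icc (φm r) (φp r) ⊆ Icc (FF S f n r (-M)) (FF S f n r M) :=
    fun r n y hy => ⟨le_trans (hage r n) hy.1, le_trans hy.2 (hble r n)⟩
  have hxinv : ∀ (r : Θ) n y, y ∈ Icc (FF S f n r (-M)) (FF S f n r M) →
      Function.invFunOn (FF S f n r) (Icc (-M) M) y ∈ Icc (-M) M ∧
        FF S f n r (Function.invFunOn (FF S f n r) (Icc (-M) M) y) = y := by
    intro r n y hy
    obtain ⟨x, hx, hxy⟩ := intermediate_value_Icc hMM (hFcont n r) hy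
    exact ⟨Function.invFunOn_mem ⟨x, hx, hxy⟩, Function.invFunOn_eq ⟨x, hx, hxy⟩⟩
  -- boundary limits for the pair (q,p)
  have hQα1 : Qf * α < 1 := by linarith [mul_comm α Qf, hαQ]
  have hformp : ∀ n, Gn S f M q p n (φp q) = FF S f n p (φp ((⇑S.symm)^[n] q)) := by
    intro n
    conv_lhs => rw [hφpeq q n]
    exact hGneq q p n _ (hφpIcc _)
  have hformm : ∀ n, Gn S f M q p n (φm q) = FF S f n p (φm ((⇑S.symm)^[n] q)) := by
    intro n
    conv_lhs => rw [hφmeq q n]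
    exact hGneq q p n _ (hφmIcc _)
  have hgeo : Tendsto (fun n : ℕ => K * (Qf * α) ^ n) atTop (𝓝 0) := by
    have := (tendsto_pow_atTop_nhds_zero_of_lt_one
      (mul_nonneg hQf0.le hα.1.le) hQα1).const_mul K
    simpa using this
  have hGnb : Tendsto (fun n => Gn S f M q p n (φp q)) atTop (𝓝 (φp p)) := by
    rw [← tendsto_sub_nhds_zero_iff]
    refine squeeze_zero_norm (fun n => ?_) hgeo
    rw [Real.norm_eq_abs, hformp n]
    conv_lhs => rw [hφpeq p n]
    calc |FF S f n p (φp ((⇑S.symm)^[n] q)) - FF S f n p (φp ((⇑S.symm)^[n] p))|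
        ≤ Qf ^ n * |φp ((⇑S.symm)^[n] q) - φp ((⇑S.symm)^[n] p)| :=
          hFlip n p _ (hφpIcc _) _ (hφpIcc _)
      _ ≤ Qf ^ n * (K * α ^ n) := by
          refine mul_le_mul_of_nonneg_left ?_ (pow_nonneg hQf0.le n)
          rw [abs_sub_comm]; exact hφpK n
      _ = K * (Qf * α) ^ n := by ring
  have hGna : Tendsto (fun n => Gn S f M q p n (φm q)) atTop (𝓝 (φm p)) := by
    rw [← tendsto_sub_nhds_zero_iff]
    refine squeeze_zero_norm (fun n => ?_) hgeo
    rw [Real.norm_eq_abs, hformm n]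
    conv_lhs => rw [hφmeq p n]
    calc |FF S f n p (φm ((⇑S.symm)^[n] q)) - FF S f n p (φm ((⇑S.symm)^[n] p))|
        ≤ Qf ^ n * |φm ((⇑S.symm)^[n] q) - φm ((⇑S.symm)^[n] p)| :=
          hFlip n p _ (hφmIcc _) _ (hφmIcc _)
      _ ≤ Qf ^ n * (K * α ^ n) := by
          refine mul_le_mul_of_nonneg_left ?_ (pow_nonneg hQf0.le n)
          rw [abs_sub_comm]; exact hφmK n
      _ = K * (Qf * α) ^ n := by ring
  -- monotonicity of G
  have hGmono : MonotoneOn G (Icc (φm p) (φp p)) := by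
    intro y hy z hz hyz
    have key : ∀ n, Gn S f M p q n y ≤ Gn S f M p q n z := by
      intro n
      obtain ⟨hxy1, hxy2⟩ := hxinv p n y (hKsub p n hy)
      obtain ⟨hxz1, hxz2⟩ := hxinv p n z (hKsub p n hz)
      have hxx : Function.invFunOn (FF S f n p) (Icc (-M) M) y
          ≤ Function.invFunOn (FF S f n p) (Icc (-M) M) z :=
        ((hFmono n p).le_iff_le hxy1 hxz1).mp (by rw [hxy2, hxz2]; exact hyz)
      rw [Gn_eq, Gn_eq]
      exact (hFmono n q).monotoneOn hxy1 hxz1 hxx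
    exact le_of_tendsto_of_tendsto' (hG.tendsto_at hy) (hG.tendsto_at hz) key
  -- G maps K(p) into K(q)
  have hGnmem : ∀ n, ∀ y ∈ Icc (φm p) (φp p),
      Gn S f M p q n y ∈ Icc (FF S f n q (-M)) (FF S f n q M) := by
    intro n y hy
    obtain ⟨hx1, hx2⟩ := hxinv p n y (hKsub p n hy)
    rw [Gn_eq]
    exact ⟨(hFmono n q).monotoneOn hmIcc hx1 hx1.1,
      (hFmono n q).monotoneOn hx1 hMIcc hx1.2⟩
  have hGmem : ∀ y ∈ Icc (φm p) (φp p), G y ∈ Icc (φm q) (φp q) := by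
    intro y hy
    exact ⟨le_of_tendsto_of_tendsto' (hφm' q).2 (hG.tendsto_at hy)
        (fun n => (hGnmem n y hy).1),
      le_of_tendsto_of_tendsto' (hG.tendsto_at hy) (hφp' q).2
        (fun n => (hGnmem n y hy).2)⟩
  -- continuity of the Gn's on the K sets
  have hGncont : ∀ (r t : Θ) n, ContinuousOn (Gn S f M r t n) (Icc (φm r) (φp r)) := by
    intro r t n
    have hinv : ContinuousOn (Function.invFunOn (FF S f n r) (Icc (-M) M))
        (FF S f n r '' Icc (-M) M) :=
      continuousOn_invFunOn isCompact_Icc (hFcont n r) (hFmono n r).injOn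
    have hsub : Icc (φm r) (φp r) ⊆ FF S f n r '' Icc (-M) M := fun y hy =>
      intermediate_value_Icc hMM (hFcont n r) (hKsub r n hy)
    have hmapsTo : MapsTo (Function.invFunOn (FF S f n r) (Icc (-M) M))
        (Icc (φm r) (φp r)) (Icc (-M) M) := by
      intro y hy
      obtain ⟨x, hx, hxy⟩ := hsub hy
      exact Function.invFunOn_mem ⟨x, hx, hxy⟩
    exact (hFcont n t).comp (hinv.mono hsub) hmapsTo
  have hGcont : ContinuousOn G (Icc (φm p) (φp p)) :=
    hG.continuousOn (Eventually.of_forall (fun n => hGncont p q n)).frequently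
  -- the inverse relation
  have hHG : ∀ y ∈ Icc (φm p) (φp p), H (G y) = y := by
    intro y hy
    set z := G y with hzdef
    have hzK : z ∈ Icc (φm q) (φp q) := hGmem y hy
    set w : ℕ → ℝ := fun n => Gn S f M p q n y with hwdef
    have hwz : Tendsto w atTop (𝓝 z) := hG.tendsto_at hy
    set t : ℕ → ℝ := fun n => max (φm q) (min (φp q) (w n)) with htdef
    have htK : ∀ n, t n ∈ Icc (φm q) (φp q) := fun n =>
      ⟨le_max_left _ _, max_le (hmple q) (min_le_left _ _)⟩
    have htz : Tendsto t atTop (𝓝 z) := by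
      rw [tendsto_iff_dist_tendsto_zero]
      refine squeeze_zero (fun n => dist_nonneg) (g := fun n => dist (w n) z)
        (fun n => ?_) (tendsto_iff_dist_tendsto_zero.mp hwz)
      have h1 : |min (φp q) (w n) - min (φp q) z| ≤ |w n - z| := by
        simpa using abs_min_sub_min_le_max (φp q) (w n) (φp q) z
      have h2 : |max (φm q) (min (φp q) (w n)) - max (φm q) (min (φp q) z)|
          ≤ max |φm q - φm q| |min (φp q) (w n) - min (φp q) z| :=
        abs_max_sub_max_le_max _ _ _ _
      have hzc : max (φm q) (min (φp q) z) = z := by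
        rw [min_eq_right hzK.2, max_eq_right hzK.1]
      show dist (t n) z ≤ dist (w n) z
      rw [Real.dist_eq, Real.dist_eq]
      simp only [htdef]
      calc |max (φm q) (min (φp q) (w n)) - z|
          = |max (φm q) (min (φp q) (w n)) - max (φm q) (min (φp q) z)| := by rw [hzc]
        _ ≤ max |φm q - φm q| |min (φp q) (w n) - min (φp q) z| := h2
        _ = max 0 |min (φp q) (w n) - min (φp q) z| := by rw [sub_self, abs_zero]
        _ ≤ max 0 |w n - z| := max_le_max le_rfl h1
        _ = |w n - z| := max_eq_right (abs_nonneg _)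
    have hGn'w : ∀ n, Gn S f M q p n (w n) = y := by
      intro n
      obtain ⟨hx1, hx2⟩ := hxinv p n y (hKsub p n hy)
      have e1 : w n = FF S f n q (Function.invFunOn (FF S f n p) (Icc (-M) M) y) := by
        simp only [hwdef]; rw [Gn_eq]
      rw [e1, hGneq q p n _ hx1, hx2]
    have hcmp1 : ∀ n, φp q ≤ w n → Gn S f M q p n (φp q) ≤ y := by
      intro n hle
      obtain ⟨hx1, hx2⟩ := hxinv p n y (hKsub p n hy)
      have e1 : w n = FF S f n q (Function.invFunOn (FF S f n p) (Icc (-M) M) y) := by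
        simp only [hwdef]; rw [Gn_eq]
      have h1 : φp ((⇑S.symm)^[n] q) ≤ Function.invFunOn (FF S f n p) (Icc (-M) M) y := by
        refine ((hFmono n q).le_iff_le (hφpIcc _) hx1).mp ?_
        rw [← hφpeq q n, ← e1]; exact hle
      calc Gn S f M q p n (φp q) = FF S f n p (φp ((⇑S.symm)^[n] q)) := hformp n
        _ ≤ FF S f n p (Function.invFunOn (FF S f n p) (Icc (-M) M) y) :=
            (hFmono n p).monotoneOn (hφpIcc _) hx1 h1
        _ = y := hx2
    have hcmp2 : ∀ n, w n ≤ φm q → y ≤ Gn S f M q p n (φm q) := by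
      intro n hle
      obtain ⟨hx1, hx2⟩ := hxinv p n y (hKsub p n hy)
      have e1 : w n = FF S f n q (Function.invFunOn (FF S f n p) (Icc (-M) M) y) := by
        simp only [hwdef]; rw [Gn_eq]
      have h1 : Function.invFunOn (FF S f n p) (Icc (-M) M) y ≤ φm ((⇑S.symm)^[n] q) := by
        refine ((hFmono n q).le_iff_le hx1 (hφmIcc _)).mp ?_
        rw [← hφmeq q n, ← e1]; exact hle
      calc y = FF S f n p (Function.invFunOn (FF S f n p) (Icc (-M) M) y) := hx2.symm
        _ ≤ FF S f n p (φm ((⇑S.symm)^[n] q)) :=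
            (hFmono n p).monotoneOn hx1 (hφmIcc _) h1
        _ = Gn S f M q p n (φm q) := (hformm n).symm
    have hεb : ∀ n, |Gn S f M q p n (t n) - y| ≤
        max (FF S f n p M - Gn S f M q p n (φp q))
          (Gn S f M q p n (φm q) - FF S f n p (-M)) := by
      intro n
      have hnn1 : Gn S f M q p n (φp q) ≤ FF S f n p M := by
        rw [hformp n]; exact (hFmono n p).monotoneOn (hφpIcc _) hMIcc (hφpIcc _).2
      have hnn2 : FF S f n p (-M) ≤ Gn S f M q p n (φm q) := by
        rw [hformm n]; exact (hFmono n p).monotoneOn hmIcc (hφmIcc _) (hφmIcc _).1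
      have hyb : y ∈ Icc (FF S f n p (-M)) (FF S f n p M) := hKsub p n hy
      rcases le_or_gt (w n) (φp q) with h1 | h1
      · rcases le_or_gt (φm q) (w n) with h2 | h2
        · have htn : t n = w n := by
            simp only [htdef]; rw [min_eq_right h1, max_eq_right h2]
          rw [htn, hGn'w n, sub_self, abs_zero]
          exact le_max_of_le_left (by linarith)
        · have htn : t n = φm q := by
            simp only [htdef]
            rw [min_eq_right (h2.le.trans (hmple q)), max_eq_left h2.le]
          have hy1 : y ≤ Gn S f M q p n (φm q) := hcmp2 n h2.le
          rw [htn, abs_of_nonneg (by linarith)]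
          exact le_max_of_le_right (by linarith [hyb.1])
      · have htn : t n = φp q := by
          simp only [htdef]; rw [min_eq_left h1.le, max_eq_right (hmple q)]
        have hy1 : Gn S f M q p n (φp q) ≤ y := hcmp1 n h1.le
        rw [htn, abs_of_nonpos (by linarith)]
        refine le_max_of_le_left ?_
        have := hyb.2
        linarith
    have hεto0 : Tendsto (fun n => max (FF S f n p M - Gn S f M q p n (φp q))
        (Gn S f M q p n (φm q) - FF S f n p (-M))) atTop (𝓝 0) := by
      have h1 := (hφp' p).2.sub hGnb
      have h2 := hGna.sub (hφm' p).2
      have h3 := h1.max h2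
      simpa using h3
    have hHt : Tendsto (fun n => H (t n)) atTop (𝓝 y) := by
      rw [tendsto_iff_dist_tendsto_zero]
      have hb : ∀ n, dist (H (t n)) y ≤ dist (H (t n)) (Gn S f M q p n (t n)) +
          max (FF S f n p M - Gn S f M q p n (φp q))
            (Gn S f M q p n (φm q) - FF S f n p (-M)) := by
        intro n
        refine (dist_triangle _ (Gn S f M q p n (t n)) _).trans ?_
        refine add_le_add_right ?_ _
        rw [Real.dist_eq]
        exact hεb n
      refine squeeze_zero (fun n => dist_nonneg) hb ?_
      have hu : Tendsto (fun n => dist (H (t n)) (Gn S f M q p n (t n))) atTop (𝓝 0) := by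
        rw [Metric.tendstoUniformlyOn_iff] at hH
        rw [Metric.tendsto_atTop]
        intro ε hε
        obtain ⟨N, hN⟩ := eventually_atTop.mp (hH ε hε)
        refine ⟨N, fun n hn => ?_⟩
        rw [Real.dist_eq, sub_zero, abs_of_nonneg dist_nonneg]
        exact hN n hn (t n) (htK n)
      simpa using hu.add hεto0
    have hHcont : ContinuousOn H (Icc (φm q) (φp q)) :=
      hH.continuousOn (Eventually.of_forall (fun n => hGncont q p n)).frequently
    have hHt2 : Tendsto (fun n => H (t n)) atTop (𝓝 (H z)) :=
      Tendsto.comp (hHcont z hzK)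
        ((tendsto_nhdsWithin_iff).2 ⟨htz, Eventually.of_forall htK⟩)
    exact tendsto_nhds_unique hHt2 hHt
  exact ⟨hGmem, hHG, hGmono, hGcont⟩

/-- second part of Proposition `theo:g`. With
`G_{θ,θ'} = lim_n f^n_{S^{-n}θ'} ∘ (f^n_{S^{-n}θ})⁻¹` on `K(θ)`, one has
`G_{θ,θ'}(K(θ)) = K(θ')` and `G_{θ',θ} = G_{θ,θ'}⁻¹` on `K(θ')`; in particular
`G_{θ,θ'} : K(θ) → K(θ')` is an orientation-preserving homeomorphism. -/
theorem stmt4 {Θ : Type*} [MetricSpace Θ] [CompactSpace Θ]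
    (S : Θ ≃ Θ) (M : ℝ) (hM : 0 < M)
    (f : Θ → ℝ → ℝ)
    (hmaps : ∀ θ, MapsTo (f θ) (Icc (-M) M) (Ioo (-M) M))
    (hmono : ∀ θ, StrictMonoOn (f θ) (Icc (-M) M))
    (hC1 : ∀ θ, ContDiffOn ℝ 1 (f θ) (Icc (-M) M))
    (hpos : ∀ θ, ∀ y ∈ Icc (-M) M, 0 < derivWithin (f θ) (Icc (-M) M) y)
    (L C α Qf : ℝ) (hL : 0 ≤ L) (hC : 0 < C) (hα : α ∈ Ioo (0:ℝ) 1)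
    (hLip : ∀ θ θ' : Θ, ∀ y ∈ Icc (-M) M, |f θ y - f θ' y| ≤ L * dist θ θ')
    (hQf : ∀ θ, ∀ y ∈ Icc (-M) M, derivWithin (f θ) (Icc (-M) M) y ≤ Qf)
    (hαQ : α * Qf < 1)
    (φm φp : Θ → ℝ)
    (hφp : ∀ ϑ : Θ, Antitone (fun n => fiter S f n ((⇑S.symm)^[n] ϑ) M) ∧
      Tendsto (fun n => fiter S f n ((⇑S.symm)^[n] ϑ) M) atTop (nhds (φp ϑ)))
    (hφm : ∀ ϑ : Θ, Monotone (fun n => fiter S f n ((⇑S.symm)^[n] ϑ) (-M)) ∧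
      Tendsto (fun n => fiter S f n ((⇑S.symm)^[n] ϑ) (-M)) atTop (nhds (φm ϑ)))
    (θ θ' : Θ)
    (hstable : ∀ n : ℕ, 0 < n →
      dist ((⇑S.symm)^[n] θ) ((⇑S.symm)^[n] θ') ≤ C * α ^ n * dist θ θ')
    (hstable' : ∀ n : ℕ, 0 < n →
      dist ((⇑S.symm)^[n] θ') ((⇑S.symm)^[n] θ) ≤ C * α ^ n * dist θ' θ)
    -- G_{θ,θ'} and G_{θ',θ} as the uniform limits of the G_{·,·,n}
    (G Gswap : ℝ → ℝ)
    (hG : TendstoUniformlyOn (Gn S f M θ θ') G atTop (Icc (φm θ) (φp θ)))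
    (hGswap : TendstoUniformlyOn (Gn S f M θ' θ) Gswap atTop (Icc (φm θ') (φp θ'))) :
    G '' Icc (φm θ) (φp θ) = Icc (φm θ') (φp θ') ∧
    (∀ y ∈ Icc (φm θ) (φp θ), Gswap (G y) = y) ∧
    (∀ y ∈ Icc (φm θ') (φp θ'), G (Gswap y) = y) ∧
    StrictMonoOn G (Icc (φm θ) (φp θ)) ∧
    ContinuousOn G (Icc (φm θ) (φp θ)) := by
  obtain ⟨hmem1, hHG1, hmono1, hcont1⟩ :=
    aux_main S M hM f hmaps hmono hC1 hpos L C α Qf hL hC hα hLip hQf hαQ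
      φm φp hφp hφm θ θ' hstable G Gswap hG hGswap
  obtain ⟨hmem2, hGH2, _, _⟩ :=
    aux_main S M hM f hmaps hmono hC1 hpos L C α Qf hL hC hα hLip hQf hαQ
      φm φp hφp hφm θ' θ hstable' Gswap G hGswap hG
  refine ⟨?_, hHG1, hGH2, ?_, hcont1⟩
  · ext ww
    constructor
    · rintro ⟨y, hy, rfl⟩
      exact hmem1 y hy
    · intro hw
      exact ⟨Gswap ww, hmem2 ww hw, hGH2 ww hw⟩
  · intro y hy z hz hyz
    refine lt_of_le_of_ne (hmono1 hy hz hyz.le) (fun hcon => ?_)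
    have : y = z := by rw [← hHG1 y hy, ← hHG1 z hz, hcon]
    exact absurd this (ne_of_lt hyz)
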